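/- Let X and Y be topological spaces and let S be a nowhere dense weak P subset of X. Then no dense countably tight subset A of the product X × Y intersects S × Y; that is, if A ⊆ X × Y is dense in X × Y and the subspace A is countably tight, then A ∩ (S × Y) = ∅. -/

import Mathlib

open Set

/-- A topological space `Z` is countably tight if whenever a point lies in the closure
of a set `A`, it lies in the closure of a countable subset of `A`. -/
def CountablyTight (Z : Type*) [TopologicalSpace Z] : Prop :=
  ∀ (A : Set Z) (z : Z), z ∈ closure A → ∃ B ⊆ A, B.Countable ∧ z ∈ closure B

/-- A nonempty subset `S` of a space is a weak P set if the closure of every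
countable subset of its complement is disjoint from `S`. -/
def IsWeakPSet {Z : Type*} [TopologicalSpace Z] (S : Set Z) : Prop :=
  S.Nonempty ∧ ∀ T : Set Z, T ⊆ Sᶜ → T.Countable → closure T ∩ S = ∅

theorem stmt_13 {X Y : Type*} [TopologicalSpace X] [TopologicalSpace Y]
    (S : Set X) (hnwd : IsNowhereDense S) (hwp : IsWeakPSet S)
    (A : Set (X × Y)) (hdense : Dense A) (hct : CountablyTight ↥A) :
    A ∩ (S ×ˢ (univ : Set Y)) = ∅ := by
  ext p
  simp only [mem_inter_iff, mem_empty_iff_false, iff_false, not_and]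
  intro hpA hpS
  have hpS' : p.1 ∈ S := hpS.1
  -- The open set W = (closure S)ᶜ ×ˢ univ is dense and open
  have hWopen : IsOpen (((closure S)ᶜ ×ˢ (univ : Set Y)) : Set (X × Y)) :=
    (isOpen_compl_iff.mpr isClosed_closure).prod isOpen_univ
  have hUdense : Dense ((closure S)ᶜ : Set X) :=
    interior_eq_empty_iff_dense_compl.mp hnwd
  have hWdense : Dense (((closure S)ᶜ ×ˢ (univ : Set Y)) : Set (X × Y)) :=
    hUdense.prod dense_univ
  have hAW : Dense (A ∩ ((closure S)ᶜ ×ˢ (univ : Set Y))) :=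
    hdense.inter_of_isOpen_right hWdense hWopen
  -- pull back to the subtype A
  set a : A := ⟨p, hpA⟩ with ha
  set C : Set A := {x : A | (x : X × Y) ∈ (closure S)ᶜ ×ˢ (univ : Set Y)} with hC
  have hval : (Subtype.val '' C) = A ∩ ((closure S)ᶜ ×ˢ (univ : Set Y)) := by
    ext q
    constructor
    · rintro ⟨⟨q, hqA⟩, hqC, rfl⟩; exact ⟨hqA, hqC⟩
    · rintro ⟨hqA, hqW⟩; exact ⟨⟨q, hqA⟩, hqW, rfl⟩
  have haC : a ∈ closure C := by
    rw [Topology.IsInducing.subtypeVal.closure_eq_preimage_closure_image C]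
    simp only [mem_preimage, hval]
    exact hAW.closure_eq ▸ mem_univ _
  obtain ⟨B, hBC, hBcount, haB⟩ := hct C a haC
  -- project to X
  set T : Set X := Prod.fst '' (Subtype.val '' B) with hT
  have hTcount : T.Countable := (hBcount.image _).image _
  have hTsub : T ⊆ Sᶜ := by
    rintro x ⟨q, ⟨b, hbB, rfl⟩, rfl⟩
    exact fun hx => (hBC hbB).1 (subset_closure hx)
  have hclT : p.1 ∈ closure T := by
    have h1 : (a : X × Y) ∈ closure (Subtype.val '' B) :=
      (image_closure_subset_closure_image continuous_subtype_val) ⟨a, haB, rfl⟩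
    have h2 : (a : X × Y).1 ∈ closure T :=
      (image_closure_subset_closure_image continuous_fst) ⟨_, h1, rfl⟩
    exact h2
  have := hwp.2 T hTsub hTcount
  exact absurd (this ▸ (mem_inter hclT hpS' : p.1 ∈ closure T ∩ S)) (by simp)
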